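/- Let W ⊆ ℝ^n be a linear subspace, y ∈ W, and J ⊆ {1,…,n}. Then there exists z ∈ W that is sign-consistent with y such that z_J = 0 and ‖z − y‖_∞ ≤ κ_W ‖y_J‖₁. -/

import Mathlib

open scoped BigOperators

variable {ι : Type*} [Fintype ι] [DecidableEq ι]

/-- The ℓ₁ norm of a vector. -/
noncomputable def norm1 (x : ι → ℝ) : ℝ := ∑ i, |x i|

/-- The ℓ∞ norm of a vector. -/
noncomputable def normInf (x : ι → ℝ) : ℝ := ⨆ i, |x i|

/-- The ℓ₂ norm of a vector. -/
noncomputable def norm2 (x : ι → ℝ) : ℝ := Real.sqrt (∑ i, (x i) ^ 2)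

/-- The componentwise negative part `max (-x) 0`. -/
noncomputable def vneg (x : ι → ℝ) : ι → ℝ := fun i => max (-(x i)) 0

/-- The componentwise positive part `max x 0`. -/
noncomputable def vpos (x : ι → ℝ) : ι → ℝ := fun i => max (x i) 0

/-- `y` is sign-consistent with `x`. -/
def SignConsistent (y x : ι → ℝ) : Prop :=
  (∀ i, 0 ≤ x i * y i) ∧ ∀ i, x i = 0 → y i = 0

/-- The subspace `ℝ^n_C` of vectors supported on `C`. -/
def coordSubspace (C : Set ι) : Submodule ℝ (ι → ℝ) where
  carrier := {x | ∀ i ∉ C, x i = 0}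
  zero_mem' := by intro i _; rfl
  add_mem' := by intro a b ha hb i hi; simp [ha i hi, hb i hi]
  smul_mem' := by intro c a ha i hi; simp [ha i hi]

/-- `C` is a circuit of the subspace `W`: `W ∩ ℝ^n_C` is one-dimensional and no
strict subset of `C` has this property. -/
def IsCircuit (W : Submodule ℝ (ι → ℝ)) (C : Set ι) : Prop :=
  Module.finrank ℝ ↥(W ⊓ coordSubspace C) = 1 ∧
  ∀ C' : Set ι, C' ⊂ C → Module.finrank ℝ ↥(W ⊓ coordSubspace C') ≠ 1

/-- The circuit imbalance measure `κ_W`. -/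
noncomputable def kappa (W : Submodule ℝ (ι → ℝ)) : ℝ :=
  sSup ({1} ∪ {r | ∃ C : Set ι, IsCircuit W C ∧ ∃ g ∈ W, g ≠ 0 ∧ {i | g i ≠ 0} = C ∧
    r = sSup ((fun i => |g i|) '' C) / sInf ((fun i => |g i|) '' C)})

/-- The matroidal closure of `K` with respect to `W`. -/
def clos (W : Submodule ℝ (ι → ℝ)) (K : Set ι) : Set ι :=
  K ∪ {j | j ∉ K ∧ ∃ C : Set ι, IsCircuit W C ∧ j ∈ C ∧ C ⊆ K ∪ {j}}

/-- `z` is the minimum-norm lift `L_I^W(p)` of `p` to `W`: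
`z ∈ W`, `z` agrees with `p` on `I`, and `z` has minimum ℓ₂-norm among such vectors. -/
def IsMinLift (W : Submodule ℝ (ι → ℝ)) (I : Finset ι) (p z : ι → ℝ) : Prop :=
  z ∈ W ∧ (∀ i ∈ I, z i = p i) ∧
  ∀ z' ∈ W, (∀ i ∈ I, z' i = p i) → norm2 z ≤ norm2 z'

/-- The ℓ₂→ℓ₂ operator norm of the lifting map `L_I^W` on `π_I(W)`. -/
noncomputable def liftOpNorm (W : Submodule ℝ (ι → ℝ)) (I : Finset ι) : ℝ :=
  sSup {r | ∃ p z, IsMinLift W I p z ∧ r = norm2 z / Real.sqrt (∑ i ∈ I, (p i) ^ 2)}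

/-- The condition number `χ̄_W = max{‖L_I^W‖ : ∅ ≠ I}`. -/
noncomputable def chiBar (W : Submodule ℝ (ι → ℝ)) : ℝ :=
  sSup {r | ∃ I : Finset ι, I.Nonempty ∧ r = liftOpNorm W I}

/-- The orthogonal complement of `W` in `ℝ^n`. -/
def orthComp (W : Submodule ℝ (ι → ℝ)) : Submodule ℝ (ι → ℝ) where
  carrier := {y | ∀ x ∈ W, ∑ i, x i * y i = 0}
  zero_mem' := by intro x hx; simp
  add_mem' := by
    intro a b ha hb x hx
    simpa [mul_add, Finset.sum_add_distrib, ha x hx] using hb x hx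
  smul_mem' := by
    intro c a ha x hx
    have h := ha x hx
    have : ∑ i, x i * (c • a) i = c * ∑ i, x i * a i := by
      rw [Finset.mul_sum]
      refine Finset.sum_congr rfl fun i _ => ?_
      simp [Pi.smul_apply, smul_eq_mul]; ring
    simpa [this, h]

/-- `x` is a feasible solution to the primal program of Primal-Dual(W,d,c). -/
def PrimalFeasible (W : Submodule ℝ (ι → ℝ)) (d x : ι → ℝ) : Prop :=
  x - d ∈ W ∧ ∀ i, 0 ≤ x i

/-- `s` is a feasible solution to the dual program of Primal-Dual(W,d,c). -/
def DualFeasible (W : Submodule ℝ (ι → ℝ)) (c s : ι → ℝ) : Prop :=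
  s - c ∈ orthComp W ∧ ∀ i, 0 ≤ s i

/-- `(x,s)` is an optimal solution to Primal-Dual(W,d,c): both feasible and `⟨x,s⟩ = 0`. -/
def IsOptimalPair (W : Submodule ℝ (ι → ℝ)) (d c x s : ι → ℝ) : Prop :=
  PrimalFeasible W d x ∧ DualFeasible W c s ∧ ∑ i, x i * s i = 0

/-- The ℓ₂→ℓ₂ operator norm of a matrix. -/
noncomputable def l2OpNorm {m n : Type*} [Fintype m] [Fintype n] [DecidableEq n]
    (A : Matrix m n ℝ) : ℝ :=
  ‖LinearMap.toContinuousLinearMap (Matrix.toEuclideanLin A)‖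

/-- The max-norm (largest absolute value of an entry) of a matrix. -/
noncomputable def matMaxNorm {m n : Type*} [Fintype m] [Fintype n] (A : Matrix m n ℝ) : ℝ :=
  ⨆ i, ⨆ j, |A i j|

section Aux
open scoped Classical

variable {n : ℕ}

lemma mem_coordSubspace {C : Set (Fin n)} {x : Fin n → ℝ} :
    x ∈ coordSubspace C ↔ ∀ i ∉ C, x i = 0 := Iff.rfl

/-- two nonzero vectors in W supported exactly on a circuit C are proportional -/
lemma circuit_proportional {W : Submodule ℝ (Fin n → ℝ)} {C : Set (Fin n)}
    (hC : IsCircuit W C) {g g₀ : Fin n → ℝ} (hg : g ∈ W) (hgs : {i | g i ≠ 0} = C)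
    (hg₀ : g₀ ∈ W) (hg₀0 : g₀ ≠ 0) (hg₀s : {i | g₀ i ≠ 0} = C) :
    ∃ c : ℝ, g = c • g₀ := by
  set S := W ⊓ coordSubspace C with hS
  have hmem : ∀ (v : Fin n → ℝ), v ∈ W → {i | v i ≠ 0} = C → v ∈ S := by
    intro v hv hvs
    refine Submodule.mem_inf.2 ⟨hv, ?_⟩
    intro i hi
    by_contra h
    exact hi (hvs ▸ h)
  have hg₀S : g₀ ∈ S := hmem g₀ hg₀ hg₀s
  have hgS : g ∈ S := hmem g hg hgs
  have hne : (⟨g₀, hg₀S⟩ : S) ≠ 0 := by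
    simp [Submodule.mk_eq_zero, hg₀0]
  have h1 : Submodule.span ℝ {(⟨g₀, hg₀S⟩ : S)} = ⊤ :=
    (finrank_eq_one_iff_of_nonzero _ hne).1 hC.1
  have : (⟨g, hgS⟩ : S) ∈ Submodule.span ℝ {(⟨g₀, hg₀S⟩ : S)} := h1 ▸ Submodule.mem_top
  obtain ⟨c, hc⟩ := Submodule.mem_span_singleton.1 this
  exact ⟨c, by simpa [eq_comm] using congrArg Subtype.val hc⟩


noncomputable def ratioOf (g : Fin n → ℝ) (C : Set (Fin n)) : ℝ :=
  sSup ((fun i => |g i|) '' C) / sInf ((fun i => |g i|) '' C)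

lemma csSup_mul_img (c : ℝ) (hc : 0 ≤ c) (s : Set ℝ) (hfin : s.Finite) (hne : s.Nonempty) :
    sSup ((fun x => c * x) '' s) = c * sSup s := by
  refine IsGreatest.csSup_eq ⟨⟨_, hne.csSup_mem hfin, rfl⟩, ?_⟩
  rintro x ⟨a, ha, rfl⟩
  exact mul_le_mul_of_nonneg_left (le_csSup hfin.bddAbove ha) hc

lemma csInf_mul_img (c : ℝ) (hc : 0 ≤ c) (s : Set ℝ) (hfin : s.Finite) (hne : s.Nonempty) :
    sInf ((fun x => c * x) '' s) = c * sInf s := by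
  refine IsLeast.csInf_eq ⟨⟨_, hne.csInf_mem hfin, rfl⟩, ?_⟩
  rintro x ⟨a, ha, rfl⟩
  exact mul_le_mul_of_nonneg_left (csInf_le hfin.bddBelow ha) hc

lemma ratio_smul_eq {g g₀ : Fin n → ℝ} {c : ℝ} (hc : c ≠ 0) (hg : g = c • g₀)
    {C : Set (Fin n)} (hCne : C.Nonempty) : ratioOf g C = ratioOf g₀ C := by
  have himg : (fun i => |g i|) '' C = (fun x => |c| * x) '' ((fun i => |g₀ i|) '' C) := by
    rw [Set.image_image]
    refine Set.image_congr fun i _ => ?_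
    simp [hg, abs_mul]
  have hfin : ((fun i => |g₀ i|) '' C).Finite := (Set.toFinite C).image _
  have hne : ((fun i => |g₀ i|) '' C).Nonempty := hCne.image _
  have hcpos : (0:ℝ) ≤ |c| := abs_nonneg c
  rw [ratioOf, himg, csSup_mul_img _ hcpos _ hfin hne, csInf_mul_img _ hcpos _ hfin hne,
    mul_div_mul_left _ _ (abs_ne_zero.2 hc)]
  rfl

/-- the set defining kappa -/
def kappaSet (W : Submodule ℝ (Fin n → ℝ)) : Set ℝ :=
  ({1} ∪ {r | ∃ C : Set (Fin n), IsCircuit W C ∧ ∃ g ∈ W, g ≠ 0 ∧ {i | g i ≠ 0} = C ∧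
    r = sSup ((fun i => |g i|) '' C) / sInf ((fun i => |g i|) '' C)})

lemma kappa_eq (W : Submodule ℝ (Fin n → ℝ)) : kappa W = sSup (kappaSet W) := rfl

lemma kappaSet_bddAbove (W : Submodule ℝ (Fin n → ℝ)) : BddAbove (kappaSet W) := by
  classical
  set F : Set (Fin n) → ℝ := fun C =>
    if h : ∃ g, g ∈ W ∧ g ≠ 0 ∧ {i | g i ≠ 0} = C then ratioOf h.choose C else 0 with hF
  have hsub : kappaSet W ⊆ {1} ∪ Set.range F := by
    rintro r (hr | ⟨C, hC, g, hgW, hg0, hgs, rfl⟩)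
    · exact Or.inl hr
    refine Or.inr ⟨C, ?_⟩
    have hex : ∃ g', g' ∈ W ∧ g' ≠ 0 ∧ {i | g' i ≠ 0} = C := ⟨g, hgW, hg0, hgs⟩
    obtain ⟨h₀W, h₀0, h₀s⟩ := hex.choose_spec
    obtain ⟨c, hc⟩ := circuit_proportional hC hgW hgs h₀W h₀0 h₀s
    have hc0 : c ≠ 0 := by
      rintro rfl
      simp at hc
      exact hg0 hc
    have hCne : C.Nonempty := by
      obtain ⟨i, hi⟩ := Function.ne_iff.1 hg0
      exact ⟨i, hgs ▸ hi⟩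
    rw [hF]
    simp only [dif_pos hex]
    exact (ratio_smul_eq hc0 hc hCne).symm
  exact (Set.Finite.subset (Set.finite_singleton 1 |>.union (Set.finite_range F)) hsub).bddAbove

lemma one_le_kappa (W : Submodule ℝ (Fin n → ℝ)) : 1 ≤ kappa W :=
  le_csSup (kappaSet_bddAbove W) (Or.inl rfl)

lemma kappa_nonneg (W : Submodule ℝ (Fin n → ℝ)) : 0 ≤ kappa W :=
  le_trans zero_le_one (one_le_kappa W)

lemma abs_le_kappa_mul {W : Submodule ℝ (Fin n → ℝ)} {g : Fin n → ℝ}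
    (hgW : g ∈ W) (hg0 : g ≠ 0) (hC : IsCircuit W {i | g i ≠ 0})
    {j : Fin n} (hj : g j ≠ 0) (i : Fin n) : |g i| ≤ kappa W * |g j| := by
  set C := {i | g i ≠ 0} with hCdef
  by_cases hi : g i = 0
  · rw [hi, abs_zero]
    exact mul_nonneg (kappa_nonneg W) (abs_nonneg _)
  set s := (fun i => |g i|) '' C with hs
  have hfin : s.Finite := (Set.toFinite C).image _
  have hne : s.Nonempty := ⟨|g j|, ⟨j, hj, rfl⟩⟩
  have hiS : |g i| ∈ s := ⟨i, hi, rfl⟩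
  have hjS : |g j| ∈ s := ⟨j, hj, rfl⟩
  have hInf_pos : 0 < sInf s := by
    obtain ⟨k, hk, hke⟩ := hne.csInf_mem hfin
    rw [← hke]
    exact abs_pos.2 hk
  have h1 : |g i| ≤ sSup s := le_csSup hfin.bddAbove hiS
  have h2 : sInf s ≤ |g j| := csInf_le hfin.bddBelow hjS
  have hr : sSup s / sInf s ∈ kappaSet W :=
    Or.inr ⟨C, hC, g, hgW, hg0, rfl, rfl⟩
  have hrk : sSup s / sInf s ≤ kappa W := le_csSup (kappaSet_bddAbove W) hr
  have hSup_nonneg : 0 ≤ sSup s := le_trans hInf_pos.le (csInf_le_csSup hne hfin.bddBelow hfin.bddAbove)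
  calc |g i| ≤ sSup s := h1
    _ = (sSup s / sInf s) * sInf s := by field_simp
    _ ≤ (sSup s / sInf s) * |g j| :=
        mul_le_mul_of_nonneg_left h2 (div_nonneg hSup_nonneg hInf_pos.le)
    _ ≤ kappa W * |g j| := mul_le_mul_of_nonneg_right hrk (abs_nonneg _)

lemma minimal_isCircuit {W : Submodule ℝ (Fin n → ℝ)} {g : Fin n → ℝ}
    (hgW : g ∈ W) (hg0 : g ≠ 0)
    (hmin : ∀ h ∈ W, {i | h i ≠ 0} ⊂ {i | g i ≠ 0} → h = 0) :
    IsCircuit W {i | g i ≠ 0} := by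
  set C := {i | g i ≠ 0} with hCdef
  have hgC : g ∈ W ⊓ coordSubspace C := by
    refine Submodule.mem_inf.2 ⟨hgW, fun i hi => ?_⟩
    by_contra h
    exact hi h
  constructor
  · have hspan : W ⊓ coordSubspace C = Submodule.span ℝ {g} := by
      apply le_antisymm
      · intro h hh
        obtain ⟨hhW, hhC⟩ := Submodule.mem_inf.1 hh
        by_cases hh0 : h = 0
        · simp [hh0]
        obtain ⟨i0, hi0⟩ := Function.ne_iff.1 hg0
        have hgi0 : g i0 ≠ 0 := hi0
        set h' := h - (h i0 / g i0) • g with hh'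
        have hh'W : h' ∈ W := Submodule.sub_mem W hhW (Submodule.smul_mem W _ hgW)
        have hh'sup : {i | h' i ≠ 0} ⊂ C := by
          constructor
          · intro i hi
            by_contra hiC
            have h1 : g i = 0 := by
              by_contra hgi; exact hiC hgi
            have h2 : h i = 0 := hhC i hiC
            apply hi
            simp [hh', h1, h2]
          · intro hsub
            have : i0 ∈ {i | h' i ≠ 0} := hsub hgi0
            apply this
            simp only [hh', Pi.sub_apply, Pi.smul_apply, smul_eq_mul]
            field_simp
            ring
        have : h' = 0 := hmin h' hh'W hh'sup
        have heq : h = (h i0 / g i0) • g := by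
          have := sub_eq_zero.1 this
          linear_combination (norm := module) this
        rw [heq]
        exact Submodule.smul_mem _ _ (Submodule.mem_span_singleton_self g)
      · rw [Submodule.span_le, Set.singleton_subset_iff]
        exact hgC
    rw [hspan]
    exact finrank_span_singleton hg0
  · intro C' hC' hrank
    have : Nontrivial ↥(W ⊓ coordSubspace C') := by
      rw [← Module.finrank_pos_iff (R := ℝ)]
      omega
    obtain ⟨x, hx⟩ := exists_ne (0 : ↥(W ⊓ coordSubspace C'))
    have hxW : (x : Fin n → ℝ) ∈ W := (Submodule.mem_inf.1 x.2).1
    have hxC' : ∀ i ∉ C', (x : Fin n → ℝ) i = 0 := (Submodule.mem_inf.1 x.2).2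
    have hx0 : (x : Fin n → ℝ) ≠ 0 := fun h => hx (Subtype.ext h)
    have hsub : {i | (x : Fin n → ℝ) i ≠ 0} ⊂ C := by
      refine lt_of_le_of_lt ?_ hC'
      intro i hi
      by_contra hiC'
      exact hi (hxC' i hiC')
    exact hx0 (hmin _ hxW hsub)

noncomputable def suppF (x : Fin n → ℝ) : Finset (Fin n) :=
  Finset.univ.filter (fun i => x i ≠ 0)

lemma mem_suppF {x : Fin n → ℝ} {i : Fin n} : i ∈ suppF x ↔ x i ≠ 0 := by
  simp [suppF]

lemma coe_suppF (x : Fin n → ℝ) : (↑(suppF x) : Set (Fin n)) = {i | x i ≠ 0} := by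
  ext i; simp [suppF]

lemma key_id {a b t : ℝ} (hb : b ≠ 0) : (a - t * b) * a = (b * a) * (a / b - t) := by
  field_simp

lemma div_pos_of_mul_pos {a b : ℝ} (h : 0 < b * a) : 0 < a / b := by
  rcases mul_pos_iff.1 h with ⟨hb, ha⟩ | ⟨hb, ha⟩
  · exact div_pos ha hb
  · exact div_pos_of_neg_of_neg ha hb

lemma div_neg_of_mul_neg {a b : ℝ} (h : b * a < 0) : a / b < 0 := by
  rcases mul_neg_iff.1 h with ⟨hb, ha⟩ | ⟨hb, ha⟩
  · exact div_neg_of_neg_of_pos ha hb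
  · exact div_neg_of_pos_of_neg ha hb

lemma sgn_trans {a b c : ℝ} (h1 : 0 ≤ a * b) (h2 : 0 ≤ b * c) (hb : b ≠ 0) : 0 ≤ a * c := by
  rcases lt_trichotomy b 0 with h | h | h
  · have ha : a ≤ 0 := by nlinarith
    have hcn : c ≤ 0 := by nlinarith
    nlinarith
  · exact absurd h hb
  · have ha : 0 ≤ a := by nlinarith
    have hcn : 0 ≤ c := by nlinarith
    exact mul_nonneg ha hcn

lemma reduce_step_aux {W : Submodule ℝ (Fin n → ℝ)} {g h : Fin n → ℝ}
    (hgW : g ∈ W) (hhW : h ∈ W) (hh0 : h ≠ 0)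
    (hsub : {i | h i ≠ 0} ⊂ {i | g i ≠ 0}) {j : Fin n} (hj : g j ≠ 0)
    (hjc : 0 ≤ h j * g j) :
    ∃ g', g' ∈ W ∧ g' j ≠ 0 ∧ (∀ i, 0 ≤ g' i * g i) ∧ (∀ i, g i = 0 → g' i = 0) ∧
      (suppF g').card < (suppF g).card := by
  have hss : ∀ i, h i ≠ 0 → g i ≠ 0 := fun i hi => hsub.1 hi
  have hgz : ∀ i, g i = 0 → h i = 0 := by
    intro i hgi
    by_contra hhi
    exact (hss i hhi) hgi
  by_cases hB : ∃ i, h i * g i < 0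
  · -- mixed signs: shift by max of negative ratios
    set S' := Finset.univ.filter (fun i => h i * g i < 0) with hS'
    have hS'ne : S'.Nonempty := by
      obtain ⟨i, hi⟩ := hB
      exact ⟨i, by simp [hS', hi]⟩
    have hS'h : ∀ i ∈ S', h i ≠ 0 := by
      intro i hi
      simp only [hS', Finset.mem_filter] at hi
      intro h0
      rw [h0] at hi
      simp at hi
    set t := (S'.image (fun i => g i / h i)).max' (hS'ne.image _) with ht
    have htneg : t < 0 := by
      obtain ⟨i1, hi1, hie⟩ := Finset.mem_image.1 ((S'.image (fun i => g i / h i)).max'_mem (hS'ne.image _))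
      rw [ht, ← hie]
      simp only [hS', Finset.mem_filter] at hi1
      exact div_neg_of_mul_neg hi1.2
    have htle : ∀ i ∈ S', g i / h i ≤ t := fun i hi => by
      exact le_trans (Finset.le_max' (S'.image fun i => g i / h i) _
        (Finset.mem_image_of_mem _ hi)) (le_of_eq ht.symm)
    refine ⟨g - t • h, Submodule.sub_mem W hgW (Submodule.smul_mem W _ hhW), ?_, ?_, ?_, ?_⟩
    · -- j survives
      by_cases hhj : h j = 0
      · intro h0
        apply hj
        simp only [Pi.sub_apply, Pi.smul_apply, smul_eq_mul, hhj, mul_zero, sub_zero] at h0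
        exact h0
      · have hpos : 0 < h j * g j := lt_of_le_of_ne hjc (by
          intro h0
          rcases mul_eq_zero.1 h0.symm with h1 | h1
          exacts [hhj h1, hj h1])
        have hr : 0 < g j / h j := div_pos_of_mul_pos hpos
        have : ((g - t • h) j) * g j = (h j * g j) * (g j / h j - t) := by
          simpa using key_id (a := g j) (b := h j) (t := t) hhj
        intro h0
        rw [h0, zero_mul] at this
        have : (h j * g j) * (g j / h j - t) > 0 := mul_pos hpos (by linarith)
        linarith
    · -- sign consistency with g
      intro i
      by_cases hhi : h i = 0
      · simpa [hhi] using mul_self_nonneg (g i)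
      · have hid : ((g - t • h) i) * g i = (h i * g i) * (g i / h i - t) := by
          simpa using key_id (a := g i) (b := h i) (t := t) hhi
        rw [hid]
        rcases lt_trichotomy (h i * g i) 0 with hc | hc | hc
        · have hiS' : i ∈ S' := by simp [hS', hc]
          have := htle i hiS'
          nlinarith
        · rw [hc, zero_mul]
        · have hr : 0 < g i / h i := div_pos_of_mul_pos hc
          nlinarith
    · intro i hgi
      simp [hgz i hgi, hgi]
    · -- cardinality decrease
      obtain ⟨i1, hi1, hie⟩ := Finset.mem_image.1 ((S'.image (fun i => g i / h i)).max'_mem (hS'ne.image _))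
      have hh1 : h i1 ≠ 0 := hS'h i1 hi1
      have hg1 : g i1 ≠ 0 := hss i1 hh1
      have ht1 : t = g i1 / h i1 := by rw [ht, ← hie]
      have hzero : (g - t • h) i1 = 0 := by
        show g i1 - t * h i1 = 0
        rw [ht1]
        field_simp
        ring
      apply Finset.card_lt_card
      constructor
      · intro i hi
        rw [mem_suppF] at hi ⊢
        intro hgi
        exact hi (by simp [hgz i hgi, hgi])
      · intro hcon
        have : i1 ∈ suppF (g - t • h) := hcon (mem_suppF.2 hg1)
        exact (mem_suppF.1 this) hzero
  · -- all products nonnegative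
    push_neg at hB
    by_cases hhj : h j ≠ 0
    · -- h itself is a smaller candidate
      refine ⟨h, hhW, hhj, fun i => hB i, hgz, ?_⟩
      apply Finset.card_lt_card
      rw [Finset.ssubset_iff_of_subset]
      · obtain ⟨i, hig, hih⟩ := Set.exists_of_ssubset hsub
        exact ⟨i, mem_suppF.2 hig, fun hc => hih (mem_suppF.1 hc)⟩
      · intro i hi
        rw [mem_suppF] at hi ⊢
        exact hss i hi
    · push_neg at hhj
      set S := suppF h with hS
      have hSne : S.Nonempty := by
        obtain ⟨i, hi⟩ := Function.ne_iff.1 hh0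
        exact ⟨i, mem_suppF.2 hi⟩
      have hSpos : ∀ i ∈ S, 0 < h i * g i := by
        intro i hi
        have hhi := mem_suppF.1 hi
        exact lt_of_le_of_ne (hB i) (by
          intro h0
          rcases mul_eq_zero.1 h0.symm with h1 | h1
          exacts [hhi h1, hss i hhi h1])
      set t := (S.image (fun i => g i / h i)).min' (hSne.image _) with ht
      have htle : ∀ i ∈ S, t ≤ g i / h i :=
        fun i hi => Finset.min'_le _ _ (Finset.mem_image_of_mem _ hi)
      refine ⟨g - t • h, Submodule.sub_mem W hgW (Submodule.smul_mem W _ hhW), ?_, ?_, ?_, ?_⟩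
      · intro h0
        apply hj
        simp only [Pi.sub_apply, Pi.smul_apply, smul_eq_mul, hhj, mul_zero, sub_zero] at h0
        exact h0
      · intro i
        by_cases hhi : h i = 0
        · simpa [hhi] using mul_self_nonneg (g i)
        · have hid : ((g - t • h) i) * g i = (h i * g i) * (g i / h i - t) := by
            simpa using key_id (a := g i) (b := h i) (t := t) hhi
          rw [hid]
          have hiS : i ∈ S := mem_suppF.2 hhi
          have := htle i hiS
          have := hSpos i hiS
          nlinarith
      · intro i hgi
        simp [hgz i hgi, hgi]
      · obtain ⟨i1, hi1, hie⟩ := Finset.mem_image.1 ((S.image (fun i => g i / h i)).min'_mem (hSne.image _))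
        have hh1 : h i1 ≠ 0 := mem_suppF.1 hi1
        have hg1 : g i1 ≠ 0 := hss i1 hh1
        have ht1 : t = g i1 / h i1 := by rw [ht, ← hie]
        have hzero : (g - t • h) i1 = 0 := by
          show g i1 - t * h i1 = 0
          rw [ht1]
          field_simp
          ring
        apply Finset.card_lt_card
        constructor
        · intro i hi
          rw [mem_suppF] at hi ⊢
          intro hgi
          exact hi (by simp [hgz i hgi, hgi])
        · intro hcon
          have : i1 ∈ suppF (g - t • h) := hcon (mem_suppF.2 hg1)
          exact (mem_suppF.1 this) hzero

lemma reduce_step {W : Submodule ℝ (Fin n → ℝ)} {g h : Fin n → ℝ}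
    (hgW : g ∈ W) (hhW : h ∈ W) (hh0 : h ≠ 0)
    (hsub : {i | h i ≠ 0} ⊂ {i | g i ≠ 0}) {j : Fin n} (hj : g j ≠ 0) :
    ∃ g', g' ∈ W ∧ g' j ≠ 0 ∧ (∀ i, 0 ≤ g' i * g i) ∧ (∀ i, g i = 0 → g' i = 0) ∧
      (suppF g').card < (suppF g).card := by
  by_cases hjc : 0 ≤ h j * g j
  · exact reduce_step_aux hgW hhW hh0 hsub hj hjc
  · push_neg at hjc
    have hsupn : {i | (-h) i ≠ 0} = {i | h i ≠ 0} := by ext i; simp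
    refine reduce_step_aux hgW (Submodule.neg_mem W hhW) (neg_ne_zero.2 hh0)
      (hsupn ▸ hsub) hj ?_
    simp only [Pi.neg_apply, neg_mul]
    linarith

lemma exists_conformal_circuit {W : Submodule ℝ (Fin n → ℝ)} {y : Fin n → ℝ}
    (hy : y ∈ W) {j : Fin n} (hyj : y j ≠ 0) :
    ∃ g, g ∈ W ∧ g j ≠ 0 ∧ (∀ i, 0 ≤ g i * y i) ∧ (∀ i, y i = 0 → g i = 0) ∧
      (∀ i, |g i| ≤ kappa W * |g j|) := by
  set P : (Fin n → ℝ) → Prop := fun g =>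
    g ∈ W ∧ g j ≠ 0 ∧ (∀ i, 0 ≤ g i * y i) ∧ (∀ i, y i = 0 → g i = 0) with hP
  have hPy : P y := ⟨hy, hyj, fun i => mul_self_nonneg _, fun i h => h⟩
  set K : Set ℕ := {k | ∃ g, P g ∧ (suppF g).card = k} with hK
  have hKne : K.Nonempty := ⟨_, y, hPy, rfl⟩
  obtain ⟨g, hPg, hcard⟩ := Nat.sInf_mem hKne
  obtain ⟨hgW, hgj, hsgn, hzero⟩ := hPg
  have hg0 : g ≠ 0 := fun h => hgj (by rw [h]; rfl)
  have hmin : ∀ h ∈ W, {i | h i ≠ 0} ⊂ {i | g i ≠ 0} → h = 0 := by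
    intro h hhW hsub
    by_contra hh0
    obtain ⟨g', hg'W, hg'j, hg'sgn, hg'zero, hg'card⟩ := reduce_step hgW hhW hh0 hsub hgj
    have hPg' : P g' := by
      refine ⟨hg'W, hg'j, ?_, ?_⟩
      · intro i
        by_cases hgi : g i = 0
        · simp [hg'zero i hgi]
        · exact sgn_trans (hg'sgn i) (hsgn i) hgi
      · intro i hyi
        exact hg'zero i (hzero i hyi)
    have : (suppF g').card ∈ K := ⟨g', hPg', rfl⟩
    have := Nat.sInf_le this
    omega
  have hcirc : IsCircuit W {i | g i ≠ 0} := minimal_isCircuit hgW hg0 hmin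
  exact ⟨g, hgW, hgj, hsgn, hzero, fun i => abs_le_kappa_mul hgW hg0 hcirc hgj i⟩

lemma main_round {W : Submodule ℝ (Fin n → ℝ)} (J : Finset (Fin n)) :
    ∀ N : ℕ, ∀ y, y ∈ W → (suppF y).card ≤ N →
    ∃ z, z ∈ W ∧ (∀ i, 0 ≤ z i * y i) ∧ (∀ i, |z i| ≤ |y i|) ∧ (∀ i ∈ J, z i = 0) ∧
      ∀ i, |z i - y i| ≤ kappa W * ∑ j ∈ J, (|y j| - |z j|) := by
  intro N
  induction N with
  | zero =>
    intro y hy hc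
    have hy0 : ∀ i, y i = 0 := by
      intro i
      by_contra h
      have : 0 < (suppF y).card := Finset.card_pos.2 ⟨i, mem_suppF.2 h⟩
      omega
    exact ⟨y, hy, fun i => mul_self_nonneg _, fun i => le_refl _, fun i _ => hy0 i,
      fun i => by simp⟩
  | succ N ih =>
    intro y hy hc
    by_cases hJ : ∃ j ∈ J, y j ≠ 0
    · obtain ⟨j, hjJ, hyj⟩ := hJ
      obtain ⟨g, hgW, hgj, hsgn, hzero, hratio⟩ := exists_conformal_circuit hy hyj
      have hyne : ∀ i, g i ≠ 0 → y i ≠ 0 := by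
        intro i hgi hyi
        exact hgi (hzero i hyi)
      set T := suppF g with hT
      have hTne : T.Nonempty := ⟨j, mem_suppF.2 hgj⟩
      have hrpos : ∀ i ∈ T, 0 < y i / g i := by
        intro i hi
        have hgi := mem_suppF.1 hi
        have hyi := hyne i hgi
        have : 0 < g i * y i := lt_of_le_of_ne (hsgn i) (by
          intro h0
          rcases mul_eq_zero.1 h0.symm with h1 | h1
          exacts [hgi h1, hyi h1])
        exact div_pos_of_mul_pos this
      set α := (T.image (fun i => y i / g i)).min' (hTne.image _) with hα
      have hαle : ∀ i ∈ T, α ≤ y i / g i := fun i hi =>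
        le_trans (le_of_eq hα) (Finset.min'_le _ _ (Finset.mem_image_of_mem _ hi))
      obtain ⟨i0, hi0, hi0e⟩ := Finset.mem_image.1 ((T.image (fun i => y i / g i)).min'_mem (hTne.image _))
      have hαpos : 0 < α := by
        rw [hα, ← hi0e]
        exact hrpos i0 hi0
      set y' := y - α • g with hy'
      have hy'W : y' ∈ W := Submodule.sub_mem W hy (Submodule.smul_mem W _ hgW)
      have hy'app : ∀ i, y' i = y i - α * g i := fun i => rfl
      -- per-coordinate facts
      have hfac : ∀ i, g i ≠ 0 → y' i = g i * (y i / g i - α) := by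
        intro i hgi
        rw [hy'app]
        field_simp
      have habs : ∀ i, g i ≠ 0 → |y' i| = |g i| * (y i / g i - α) ∧ |y i| = |g i| * (y i / g i) := by
        intro i hgi
        have hTi : i ∈ T := mem_suppF.2 hgi
        constructor
        · rw [hfac i hgi, abs_mul,
            abs_of_nonneg (show (0:ℝ) ≤ y i / g i - α by linarith [hαle i hTi])]
        · nth_rewrite 1 [show y i = g i * (y i / g i) by field_simp]
          rw [abs_mul, abs_of_nonneg (le_of_lt (hrpos i hTi))]
      have hsign' : ∀ i, 0 ≤ y' i * y i := by
        intro i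
        by_cases hgi : g i = 0
        · rw [hy'app, hgi, mul_zero, sub_zero]
          exact mul_self_nonneg _
        · have hTi : i ∈ T := mem_suppF.2 hgi
          rw [hfac i hgi]
          have h1 : 0 < g i * y i := lt_of_le_of_ne (hsgn i) (by
            intro h0
            rcases mul_eq_zero.1 h0.symm with h1 | h1
            exacts [hgi h1, hyne i hgi h1])
          have h2 := hαle i hTi
          nlinarith
      have habsle : ∀ i, |y' i| ≤ |y i| := by
        intro i
        by_cases hgi : g i = 0
        · rw [hy'app, hgi, mul_zero, sub_zero]
        · obtain ⟨e1, e2⟩ := habs i hgi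
          rw [e1, e2]
          have := abs_nonneg (g i)
          nlinarith
      have hzero' : ∀ i, y i = 0 → y' i = 0 := by
        intro i hyi
        rw [hy'app, hzero i hyi, mul_zero, sub_zero, hyi]
      have hstep : ∀ i, |y' i - y i| ≤ kappa W * (|y j| - |y' j|) := by
        intro i
        have hdiff : ∀ k, y' k - y k = -(α * g k) := by
          intro k; rw [hy'app]; ring
        have e3 : |y' i - y i| = α * |g i| := by
          rw [hdiff, abs_neg, abs_mul, abs_of_pos hαpos]
        have e4 : |y j| - |y' j| = α * |g j| := by
          obtain ⟨e1, e2⟩ := habs j hgj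
          rw [e1, e2]; ring
        rw [e3, e4]
        calc α * |g i| ≤ α * (kappa W * |g j|) :=
              mul_le_mul_of_nonneg_left (hratio i) hαpos.le
          _ = kappa W * (α * |g j|) := by ring
      have hy'card : (suppF y').card ≤ N := by
        have hsub : suppF y' ⊂ suppF y := by
          constructor
          · intro i hi
            rw [mem_suppF] at hi ⊢
            intro hyi
            exact hi (hzero' i hyi)
          · intro hcon
            have hgi0 : g i0 ≠ 0 := mem_suppF.1 hi0
            have hyi0 : y i0 ≠ 0 := hyne i0 hgi0
            have h5 : y' i0 = 0 := by
              rw [hfac i0 hgi0, hα, ← hi0e]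
              simp
            have := mem_suppF.1 (hcon (mem_suppF.2 hyi0))
            exact this h5
        have := Finset.card_lt_card hsub
        omega
      obtain ⟨z, hzW, hz1, hz2, hz3, hz4⟩ := ih y' hy'W hy'card
      refine ⟨z, hzW, ?_, ?_, hz3, ?_⟩
      · intro i
        by_cases hy'i : y' i = 0
        · have h12 := hz2 i
          rw [hy'i, abs_zero] at h12
          have : z i = 0 := abs_nonpos_iff.1 h12
          simp [this]
        · exact sgn_trans (hz1 i) (hsign' i) hy'i
      · intro i
        exact le_trans (hz2 i) (habsle i)
      · intro i
        have h6 : |z i - y i| ≤ |z i - y' i| + |y' i - y i| := by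
          have : z i - y i = (z i - y' i) + (y' i - y i) := by ring
          rw [this]; exact abs_add_le _ _
        have h7 := hz4 i
        have h8 := hstep i
        have h9 : |y j| - |y' j| ≤ ∑ j' ∈ J, (|y j'| - |y' j'|) :=
          Finset.single_le_sum (fun k _ => sub_nonneg.2 (habsle k)) hjJ
        have h10 : ∑ j' ∈ J, (|y j'| - |z j'|) =
            ∑ j' ∈ J, (|y' j'| - |z j'|) + ∑ j' ∈ J, (|y j'| - |y' j'|) := by
          rw [← Finset.sum_add_distrib]
          exact Finset.sum_congr rfl (fun k _ => by ring)
        have hκ := kappa_nonneg W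
        have h11 : kappa W * (|y j| - |y' j|) ≤ kappa W * ∑ j' ∈ J, (|y j'| - |y' j'|) :=
          mul_le_mul_of_nonneg_left h9 hκ
        calc |z i - y i| ≤ |z i - y' i| + |y' i - y i| := h6
          _ ≤ kappa W * ∑ j' ∈ J, (|y' j'| - |z j'|) + kappa W * (|y j| - |y' j|) := by
              linarith
          _ ≤ kappa W * ∑ j' ∈ J, (|y' j'| - |z j'|) + kappa W * ∑ j' ∈ J, (|y j'| - |y' j'|) := by
              linarith
          _ = kappa W * ∑ j' ∈ J, (|y j'| - |z j'|) := by rw [h10]; ring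
    · push_neg at hJ
      exact ⟨y, hy, fun i => mul_self_nonneg _, fun i => le_refl _, hJ,
        fun i => by simp⟩


lemma sign_consistent_rounding_aux {W : Submodule ℝ (Fin n → ℝ)}
    {y : Fin n → ℝ} (hy : y ∈ W) (J : Finset (Fin n)) :
    ∃ z : Fin n → ℝ, z ∈ W ∧ SignConsistent z y ∧ (∀ i ∈ J, z i = 0) ∧
      normInf (z - y) ≤ kappa W * ∑ i ∈ J, |y i| := by
  obtain ⟨z, hzW, hz1, hz2, hz3, hz4⟩ := main_round J (suppF y).card y hy le_rfl
  have hsum : ∑ j ∈ J, (|y j| - |z j|) = ∑ i ∈ J, |y i| :=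
    Finset.sum_congr rfl fun k hk => by rw [hz3 k hk, abs_zero, sub_zero]
  refine ⟨z, hzW, ⟨fun i => by rw [mul_comm]; exact hz1 i, fun i hyi => ?_⟩, hz3, ?_⟩
  · have := hz2 i
    rw [hyi, abs_zero] at this
    exact abs_nonpos_iff.1 this
  · rw [normInf]
    apply Real.iSup_le
    · intro i
      have : (z - y) i = z i - y i := rfl
      rw [this]
      calc |z i - y i| ≤ kappa W * ∑ j ∈ J, (|y j| - |z j|) := hz4 i
        _ = kappa W * ∑ i ∈ J, |y i| := by rw [hsum]
    · exact mul_nonneg (kappa_nonneg W) (Finset.sum_nonneg fun k _ => abs_nonneg _)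

end Aux

/-- every `y ∈ W` can be rounded to a sign-consistent `z ∈ W` with
`z_J = 0` and `‖z − y‖_∞ ≤ κ_W ‖y_J‖₁`. -/
theorem sign_consistent_rounding {n : ℕ} (W : Submodule ℝ (Fin n → ℝ))
    (y : Fin n → ℝ) (hy : y ∈ W) (J : Finset (Fin n)) :
    ∃ z : Fin n → ℝ, z ∈ W ∧ SignConsistent z y ∧ (∀ i ∈ J, z i = 0) ∧
      normInf (z - y) ≤ kappa W * ∑ i ∈ J, |y i| := by
  exact sign_consistent_rounding_aux hy J
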